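/- Let Γ be a group of polynomial growth of degree d with lim_{n→∞}|B(n)|/n^d = c_Γ > 0, and let δ ∈ (0,1). Then there exist n₀, r₀ ∈ ℕ depending only on Γ and δ such that: whenever 𝒞 is a finite collection of pairwise disjoint balls in Γ all of whose radii exceed n₀, and r > r₀, then |⊔_{W∈𝒞} int_r(W)| > (1−δ)|⊔_{W∈𝒞} W| and |⊔_{W∈𝒞} (W ∖ int_r(W))| < δ|⊔_{W∈𝒞} W|. -/

import Mathlib

open Filter MeasureTheory Function Set
open scoped BigOperators

variable {Γ : Type*} [Group Γ]

/-- The word norm associated to a finite generating set `S`: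
the infimum of `Σ |pᵢ|` over all representations `γ = s₁^{p₁} ⋯ s_l^{p_l}` with `sᵢ ∈ S`. -/
noncomputable def wordNorm (S : Finset Γ) (γ : Γ) : ℕ :=
  sInf {n | ∃ l : List (Γ × ℤ), (∀ p ∈ l, p.1 ∈ S) ∧
    (l.map fun p => p.1 ^ p.2).prod = γ ∧ (l.map fun p => p.2.natAbs).sum = n}

/-- Closed ball of radius `r` around `x` for the right word metric `d_R(x,y) = ‖x y⁻¹‖`. -/
def wordBall (S : Finset Γ) (x : Γ) (r : ℝ) : Set Γ :=
  {y | (wordNorm S (x * y⁻¹) : ℝ) ≤ r}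

lemma wordBall_mono (S : Finset Γ) (x : Γ) {r r' : ℝ} (h : r ≤ r') :
    wordBall S x r ⊆ wordBall S x r' := fun _ hy => le_trans hy h

lemma wordBall_eq_image (S : Finset Γ) (x : Γ) (r : ℝ) :
    wordBall S x r = (fun z => z * x) '' wordBall S 1 r := by
  ext y
  simp only [wordBall, Set.mem_image, Set.mem_setOf_eq]
  constructor
  · intro h
    refine ⟨y * x⁻¹, ?_, by group⟩
    simpa [mul_inv_rev] using h
  · rintro ⟨z, hz, rfl⟩
    simpa [mul_inv_rev, ← mul_assoc] using hz

lemma wordBall_ncard (S : Finset Γ) (x : Γ) (r : ℝ) :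
    (wordBall S x r).ncard = (wordBall S 1 r).ncard := by
  rw [wordBall_eq_image]
  exact Set.ncard_image_of_injective _ (mul_left_injective x)

lemma wordBall_finite_iff (S : Finset Γ) (x : Γ) (r : ℝ) :
    (wordBall S x r).Finite ↔ (wordBall S 1 r).Finite := by
  rw [wordBall_eq_image]
  exact Set.finite_image_iff ((mul_left_injective x).injOn)

lemma wordBall_floor (S : Finset Γ) (x : Γ) {r : ℝ} (hr : 0 ≤ r) :
    wordBall S x r = wordBall S x (⌊r⌋₊ : ℝ) := by
  ext y
  simp only [wordBall, Set.mem_setOf_eq, Nat.cast_le]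
  exact (Nat.le_floor_iff hr).symm

lemma ncard_iUnion_eq {α ι : Type*} [Fintype ι] (f : ι → Set α)
    (hf : ∀ i, (f i).Finite) (hd : Pairwise (Function.onFun Disjoint f)) :
    (⋃ i, f i).ncard = ∑ i, (f i).ncard := by
  classical
  have h1 : (⋃ i, f i) = ↑(Finset.univ.biUnion fun i => (hf i).toFinset) := by
    ext a; simp [Set.Finite.mem_toFinset]
  rw [h1, Set.ncard_coe_finset, Finset.card_biUnion]
  · exact Finset.sum_congr rfl fun i _ => (Set.ncard_eq_toFinset_card _ (hf i)).symm
  · intro i _ j _ hij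
    exact Set.Finite.disjoint_toFinset.mpr (hd hij)

set_option maxHeartbeats 1000000 in
/-- For large balls and large `r`, the `r`-interiors of a disjoint collection of balls
occupy more than a `(1-δ)`-fraction, and the `r`-boundaries less than a `δ`-fraction. -/
theorem small_boundary (S : Finset Γ) (hS : Subgroup.closure (S : Set Γ) = ⊤)
    (d : ℕ) (cΓ : ℝ) (hc : 0 < cΓ)
    (hP : Tendsto (fun n : ℕ => ((wordBall S 1 (n : ℝ)).ncard : ℝ) / (n : ℝ) ^ d)
      atTop (nhds cΓ))
    (δ : ℝ) (hδ : δ ∈ Set.Ioo (0 : ℝ) 1) :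
    ∃ n₀ r₀ : ℕ, ∀ (k : ℕ), 0 < k → ∀ (y : Fin k → Γ) (s : Fin k → ℝ),
      (∀ i, (n₀ : ℝ) < s i) →
      Pairwise (Function.onFun Disjoint fun i => wordBall S (y i) (s i)) →
      ∀ r : ℝ, (r₀ : ℝ) < r →
      (1 - δ) * ((⋃ i, wordBall S (y i) (s i)).ncard : ℝ) <
          ((⋃ i, wordBall S (y i) ((1 - 5 / r) * s i)).ncard : ℝ) ∧
        ((⋃ i, (wordBall S (y i) (s i) \ wordBall S (y i) ((1 - 5 / r) * s i))).ncard : ℝ) <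
          δ * ((⋃ i, wordBall S (y i) (s i)).ncard : ℝ) := by
  obtain ⟨hδ0, hδ1⟩ := hδ
  set ε : ℝ := cΓ * δ / 4 with hεdef
  have hε0 : 0 < ε := by positivity
  have hεc : ε < cΓ := by nlinarith
  obtain ⟨N, hN⟩ := Metric.tendsto_atTop.mp hP ε hε0
  -- all word balls are finite
  have hfin0 : ∀ n : ℕ, N ≤ n → 1 ≤ n → (wordBall S 1 (n : ℝ)).Finite := by
    intro n hn h1
    by_contra hinf
    have h0 : (wordBall S 1 (n : ℝ)).ncard = 0 := Set.Infinite.ncard hinf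
    have hd := hN n hn
    rw [Real.dist_eq, h0] at hd
    have hnd : (0 : ℝ) < (n : ℝ) ^ d := by positivity
    rw [Nat.cast_zero, zero_div, abs_sub_comm, abs_of_pos (by linarith : (0:ℝ) < cΓ - 0)] at hd
    linarith
  have hfin : ∀ t : ℝ, (wordBall S 1 t).Finite := by
    intro t
    refine (hfin0 (max ⌈t⌉₊ (max N 1)) (le_trans (le_max_left _ _) (le_max_right _ _))
      (le_trans (le_max_right _ _) (le_max_right _ _))).subset (wordBall_mono _ _ ?_)
    exact le_trans (Nat.le_ceil t) (by exact_mod_cast le_max_left _ _)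
  set η : ℝ := δ / (4 * ((d : ℝ) + 1)) with hηdef
  have hη0 : 0 < η := by positivity
  have hη1 : η ≤ δ / 4 := by
    rw [hηdef, div_le_div_iff₀ (by positivity) (by norm_num)]
    nlinarith
  have hdη : (d : ℝ) * η ≤ δ / 4 := by
    have hηe : η * (4 * ((d : ℝ) + 1)) = δ := by
      rw [hηdef]; field_simp
    nlinarith [hη0.le]
  set n₀ : ℕ := max (2 * N + 4) (⌈8 * ((d : ℝ) + 1) / δ⌉₊ + 1) with hn₀def
  set r₀ : ℕ := ⌈40 * ((d : ℝ) + 1) / δ⌉₊ + 20 with hr₀def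
  refine ⟨n₀, r₀, ?_⟩
  have hn₀N : (2 * N + 4 : ℝ) ≤ n₀ := by exact_mod_cast le_max_left _ _
  have hn₀δ : 8 * ((d : ℝ) + 1) / δ < n₀ := by
    calc 8 * ((d : ℝ) + 1) / δ ≤ ⌈8 * ((d : ℝ) + 1) / δ⌉₊ := Nat.le_ceil _
    _ < (⌈8 * ((d : ℝ) + 1) / δ⌉₊ + 1 : ℕ) := by push_cast; linarith
    _ ≤ (n₀ : ℝ) := by
        have h := le_max_right (2 * N + 4) (⌈8 * ((d : ℝ) + 1) / δ⌉₊ + 1)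
        rw [hn₀def]
        exact_mod_cast h
  have hr₀δ : 40 * ((d : ℝ) + 1) / δ < r₀ := by
    calc 40 * ((d : ℝ) + 1) / δ ≤ ⌈40 * ((d : ℝ) + 1) / δ⌉₊ := Nat.le_ceil _
    _ < (r₀ : ℝ) := by rw [hr₀def]; push_cast; linarith
  have hr₀20 : (20 : ℝ) ≤ r₀ := by
    rw [hr₀def]; push_cast; linarith [Nat.cast_nonneg (α := ℝ) ⌈40 * ((d : ℝ) + 1) / δ⌉₊]
  -- the key per-ball estimate
  have key : ∀ s r : ℝ, (n₀ : ℝ) < s → (r₀ : ℝ) < r →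
      (1 - δ) * ((wordBall S 1 s).ncard : ℝ) <
        ((wordBall S 1 ((1 - 5 / r) * s)).ncard : ℝ) := by
    intro s r hs hr
    have hs4 : (4 : ℝ) ≤ n₀ := by linarith [Nat.cast_nonneg (α := ℝ) N]
    have hs0 : 0 < s := by linarith
    have hr0 : (0 : ℝ) < r := by linarith
    have h5r0 : 0 < 5 / r := by positivity
    have h5r4 : 5 / r ≤ 1 / 4 := by
      rw [div_le_div_iff₀ hr0 (by norm_num)]; linarith
    -- 5/r < δ/(8(d+1)) and 1/s < δ/(8(d+1))
    have hrδ : 5 / r < δ / (8 * ((d : ℝ) + 1)) := by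
      rw [div_lt_div_iff₀ hr0 (by positivity)]
      have : 40 * ((d : ℝ) + 1) < δ * r := by
        have := (div_lt_iff₀ hδ0).mp (lt_trans hr₀δ hr)
        linarith [this]
      linarith
    have hsδ : 1 / s < δ / (8 * ((d : ℝ) + 1)) := by
      rw [div_lt_div_iff₀ hs0 (by positivity)]
      have : 8 * ((d : ℝ) + 1) < δ * s := by
        have := (div_lt_iff₀ hδ0).mp (lt_trans hn₀δ hs)
        linarith [this]
      linarith
    set t : ℝ := (1 - 5 / r) * s with htdef
    have ht0 : 0 < t := by
      have : (0:ℝ) < 1 - 5 / r := by linarith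
      positivity
    have hts : t ≥ (3 / 4) * s := by
      have : (3/4 : ℝ) ≤ 1 - 5 / r := by linarith
      nlinarith
    set m : ℕ := ⌊t⌋₊ with hmdef
    set n : ℕ := ⌊s⌋₊ with hndef
    have hns : (n : ℝ) ≤ s := Nat.floor_le hs0.le
    have hn_ge : (n₀ : ℝ) ≤ n := by
      exact_mod_cast Nat.le_floor hs.le
    have hmt : t - 1 < (m : ℝ) := by
      have := Nat.lt_floor_add_one t
      linarith
    have htN : (3 / 4 : ℝ) * (2 * N + 4) ≤ t := by
      refine le_trans ?_ hts
      have h1 : (2 * N + 4 : ℝ) ≤ s := by linarith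
      have := mul_le_mul_of_nonneg_left h1 (by norm_num : (0:ℝ) ≤ 3 / 4)
      linarith
    have hmN : ((N : ℝ)) < m := by linarith [Nat.cast_nonneg (α := ℝ) N]
    have hm1 : (1 : ℝ) ≤ m := by linarith [Nat.cast_nonneg (α := ℝ) N]
    have hmN' : N ≤ m := by exact_mod_cast hmN.le
    have hnN' : N ≤ n := by
      have : (N : ℝ) ≤ n := by linarith
      exact_mod_cast this
    have hn1 : (1 : ℝ) ≤ n := by linarith
    have hnd0 : (0 : ℝ) < (n : ℝ) ^ d := by positivity
    have hmd0 : (0 : ℝ) < (m : ℝ) ^ d := by positivity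
    -- Pansu bounds
    have hbn := hN n hnN'
    have hbm := hN m hmN'
    rw [Real.dist_eq, abs_lt] at hbn hbm
    have hbn' : ((wordBall S 1 ((n : ℕ) : ℝ)).ncard : ℝ) < (cΓ + ε) * (n : ℝ) ^ d := by
      have h2 : ((wordBall S 1 ((n : ℕ) : ℝ)).ncard : ℝ) / (n : ℝ) ^ d < cΓ + ε := by
        linarith [hbn.2]
      calc ((wordBall S 1 ((n : ℕ) : ℝ)).ncard : ℝ)
          = (((wordBall S 1 ((n : ℕ) : ℝ)).ncard : ℝ) / (n : ℝ) ^ d) * (n : ℝ) ^ d := by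
            field_simp
        _ < (cΓ + ε) * (n : ℝ) ^ d := mul_lt_mul_of_pos_right h2 hnd0
    have hbm' : (cΓ - ε) * (m : ℝ) ^ d < ((wordBall S 1 ((m : ℕ) : ℝ)).ncard : ℝ) := by
      have h2 := hbm.1
      have : (cΓ - ε) < ((wordBall S 1 ((m : ℕ) : ℝ)).ncard : ℝ) / (m : ℝ) ^ d := by linarith
      calc (cΓ - ε) * (m : ℝ) ^ d
          < (((wordBall S 1 ((m : ℕ) : ℝ)).ncard : ℝ) / (m : ℝ) ^ d) * (m : ℝ) ^ d :=
            mul_lt_mul_of_pos_right this hmd0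
        _ = _ := by field_simp
    -- m ≥ (1-η) n
    have hmn : (1 - η) * (n : ℝ) ≤ (m : ℝ) := by
      have he : (1 - 5 / r - 1 / s) * s = t - 1 := by
        rw [htdef]; field_simp
      have h1η : 1 - η ≤ 1 - 5 / r - 1 / s := by
        have : 5 / r + 1 / s < η := by
          rw [hηdef]
          have : δ / (8 * ((d : ℝ) + 1)) + δ / (8 * ((d : ℝ) + 1)) = δ / (4 * ((d : ℝ) + 1)) := by
            field_simp; ring
          linarith
        linarith
      have hη1' : 0 ≤ 1 - η := by linarith
      calc (1 - η) * (n : ℝ) ≤ (1 - η) * s := by nlinarith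
        _ ≤ (1 - 5 / r - 1 / s) * s := by nlinarith
        _ = t - 1 := he
        _ ≤ m := hmt.le
    -- Bernoulli
    have hber : 1 - (d : ℝ) * η ≤ (1 - η) ^ d := by
      have := one_add_mul_le_pow (a := -η) (by linarith) d
      have h2 : (1 : ℝ) + (d : ℝ) * (-η) = 1 - (d : ℝ) * η := by ring
      have h3 : (1 : ℝ) + (-η) = 1 - η := by ring
      rw [h2, h3] at this
      exact this
    have hpowle : (1 - δ / 4) * (n : ℝ) ^ d ≤ (m : ℝ) ^ d := by
      have ha : ((1 - η) * (n : ℝ)) ^ d ≤ (m : ℝ) ^ d :=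
        pow_le_pow_left₀ (mul_nonneg (by linarith) (Nat.cast_nonneg n)) hmn d
      rw [mul_pow] at ha
      have hb' : (1 - δ / 4 : ℝ) ≤ (1 - η) ^ d := le_trans (by linarith) hber
      calc (1 - δ / 4) * (n : ℝ) ^ d ≤ (1 - η) ^ d * (n : ℝ) ^ d :=
            mul_le_mul_of_nonneg_right hb' (by positivity)
        _ ≤ (m : ℝ) ^ d := ha
    -- scalar inequality
    have hscalar : (1 - δ) * (cΓ + ε) ≤ (cΓ - ε) * (1 - δ / 4) := by
      rw [hεdef]
      nlinarith [mul_nonneg hc.le hδ0.le, mul_nonneg (mul_nonneg hc.le hδ0.le) hδ0.le]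
    -- assemble
    rw [wordBall_floor S 1 hs0.le, wordBall_floor S 1 ht0.le, ← hndef, ← hmdef]
    have h1δ : (0 : ℝ) < 1 - δ := by linarith
    have hcε : (0 : ℝ) < cΓ - ε := by linarith
    have hA := mul_lt_mul_of_pos_left hbn' h1δ
    have hB := mul_le_mul_of_nonneg_right hscalar hnd0.le
    have hC := mul_le_mul_of_nonneg_left hpowle hcε.le
    linarith [hA, hB, hC, hbm']
  -- now the collection statement
  intro k hk y s hs hdis r hr
  have hr0 : (0 : ℝ) < r := lt_of_le_of_lt (Nat.cast_nonneg r₀) hr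
  have hfinW : ∀ i, (wordBall S (y i) (s i)).Finite :=
    fun i => (wordBall_finite_iff S (y i) (s i)).mpr (hfin _)
  have hfinI : ∀ i, (wordBall S (y i) ((1 - 5 / r) * s i)).Finite :=
    fun i => (wordBall_finite_iff S (y i) _).mpr (hfin _)
  have hfinD : ∀ i, (wordBall S (y i) (s i) \ wordBall S (y i) ((1 - 5 / r) * s i)).Finite :=
    fun i => (hfinW i).diff
  have hsi0 : ∀ i, 0 < s i := by
    intro i
    have := hs i
    have : (0:ℝ) ≤ n₀ := Nat.cast_nonneg n₀
    linarith [hs i]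
  have hsub : ∀ i, wordBall S (y i) ((1 - 5 / r) * s i) ⊆ wordBall S (y i) (s i) := by
    intro i
    refine wordBall_mono S (y i) ?_
    have h5 : 0 < 5 / r := by positivity
    nlinarith [hsi0 i]
  have hdisI : Pairwise (Function.onFun Disjoint fun i =>
      wordBall S (y i) ((1 - 5 / r) * s i)) :=
    fun i j hij => (hdis hij).mono (hsub i) (hsub j)
  have hdisD : Pairwise (Function.onFun Disjoint fun i =>
      wordBall S (y i) (s i) \ wordBall S (y i) ((1 - 5 / r) * s i)) :=
    fun i j hij => (hdis hij).mono Set.diff_subset Set.diff_subset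
  have hA : ((⋃ i, wordBall S (y i) (s i)).ncard : ℝ) =
      ∑ i, ((wordBall S 1 (s i)).ncard : ℝ) := by
    rw [ncard_iUnion_eq _ hfinW hdis]
    push_cast
    exact Finset.sum_congr rfl fun i _ => by rw [wordBall_ncard]
  have hI : ((⋃ i, wordBall S (y i) ((1 - 5 / r) * s i)).ncard : ℝ) =
      ∑ i, ((wordBall S 1 ((1 - 5 / r) * s i)).ncard : ℝ) := by
    rw [ncard_iUnion_eq _ hfinI hdisI]
    push_cast
    exact Finset.sum_congr rfl fun i _ => by rw [wordBall_ncard]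
  have hne : (Finset.univ : Finset (Fin k)).Nonempty := by
    have : Nonempty (Fin k) := ⟨⟨0, hk⟩⟩
    exact Finset.univ_nonempty
  have first : (1 - δ) * ((⋃ i, wordBall S (y i) (s i)).ncard : ℝ) <
      ((⋃ i, wordBall S (y i) ((1 - 5 / r) * s i)).ncard : ℝ) := by
    rw [hA, hI, Finset.mul_sum]
    exact Finset.sum_lt_sum_of_nonempty hne fun i _ => key (s i) r (hs i) hr
  refine ⟨first, ?_⟩
  have hunion : (⋃ i, wordBall S (y i) (s i)) =
      (⋃ i, wordBall S (y i) ((1 - 5 / r) * s i)) ∪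
      (⋃ i, (wordBall S (y i) (s i) \ wordBall S (y i) ((1 - 5 / r) * s i))) := by
    rw [← Set.iUnion_union_distrib]
    exact (Set.iUnion_congr fun i => Set.union_diff_cancel (hsub i)).symm
  have hdisjID : Disjoint (⋃ i, wordBall S (y i) ((1 - 5 / r) * s i))
      (⋃ i, (wordBall S (y i) (s i) \ wordBall S (y i) ((1 - 5 / r) * s i))) := by
    rw [Set.disjoint_iUnion_left]
    intro i
    rw [Set.disjoint_iUnion_right]
    intro j
    by_cases hij : i = j
    · subst hij
      exact Set.disjoint_sdiff_right
    · exact (hdis hij).mono (hsub i) Set.diff_subset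
  have hsum : ((⋃ i, wordBall S (y i) (s i)).ncard : ℝ) =
      ((⋃ i, wordBall S (y i) ((1 - 5 / r) * s i)).ncard : ℝ) +
      ((⋃ i, (wordBall S (y i) (s i) \ wordBall S (y i) ((1 - 5 / r) * s i))).ncard : ℝ) := by
    rw [hunion, Set.ncard_union_eq hdisjID (Set.finite_iUnion hfinI) (Set.finite_iUnion hfinD)]
    push_cast
    ring
  linarith [first, hsum]
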